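/- Let ξ be a nonnegative random variable with log-moment generating function φ(λ) = log E exp(λξ). Then for any r > 0, (E ξ^r)^{1/r} ≤ inf{φ(λ)/λ : λ > 0, φ(λ) ≥ r}. -/

import Mathlib

open MeasureTheory Real

lemma key_pointwise {r p s : ℝ} (hr : 0 < r) (hrp : r ≤ p) (hs : 0 ≤ s) :
    s ^ r ≤ p ^ r + r * p ^ (r - 1) * (Real.exp (s - p) - 1) := by
  have hp : 0 < p := hr.trans_le hrp
  have h1 : s ^ r ≤ p ^ r * Real.exp (r * (s / p - 1)) := by
    rcases eq_or_lt_of_le hs with h | h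
    · rw [← h, Real.zero_rpow hr.ne']
      positivity
    · have hx : 0 < s / p := by positivity
      have hlog : Real.log (s / p) ≤ s / p - 1 := Real.log_le_sub_one_of_pos hx
      have hsp : s ^ r = p ^ r * (s / p) ^ r := by
        rw [← Real.mul_rpow hp.le hx.le]
        congr 1
        field_simp
      rw [hsp, Real.rpow_def_of_pos hx]
      have hmono : Real.exp (Real.log (s / p) * r) ≤ Real.exp (r * (s / p - 1)) :=
        Real.exp_le_exp.mpr (by nlinarith)
      nlinarith [Real.rpow_pos_of_pos hp r]
  have hb : (0:ℝ) ≤ r / p := by positivity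
  have ha : (0:ℝ) ≤ 1 - r / p := by
    have : r / p ≤ 1 := (div_le_one hp).mpr hrp
    linarith
  have h2 := convexOn_exp.2 (Set.mem_univ (0:ℝ)) (Set.mem_univ (s - p)) ha hb (by ring)
  simp only [smul_eq_mul, mul_zero, zero_add, Real.exp_zero, mul_one] at h2
  have harg : r / p * (s - p) = r * (s / p - 1) := by field_simp
  rw [harg] at h2
  have h3 : s ^ r ≤ p ^ r * (1 - r / p + r / p * Real.exp (s - p)) := by
    calc s ^ r ≤ p ^ r * Real.exp (r * (s / p - 1)) := h1
      _ ≤ p ^ r * (1 - r / p + r / p * Real.exp (s - p)) := by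
          have := Real.rpow_pos_of_pos hp r
          nlinarith
  have hpr : p ^ (r - 1) = p ^ r / p := by
    rw [Real.rpow_sub hp, Real.rpow_one]
  rw [hpr]
  have hpr2 : p ^ r * (1 - r / p + r / p * Real.exp (s - p))
      = p ^ r + r * (p ^ r / p) * (Real.exp (s - p) - 1) := by
    field_simp
    ring
  linarith [h3, hpr2.ge, hpr2.le]

/-- For a nonnegative random variable `ξ` with log-moment generating
function `φ(λ) = log E exp(λξ)`, for any `r > 0` and any `λ > 0` such that
`exp(λξ)` is integrable (`φ(λ)` finite) and `φ(λ) ≥ r`, one has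
`(E ξ^r)^(1/r) ≤ φ(λ)/λ`; i.e. `(E ξ^r)^(1/r)` is bounded by the infimum of
`φ(λ)/λ` over such `λ`. -/
theorem stmt0 {Ω : Type*} [MeasurableSpace Ω] (μ : Measure Ω) [IsProbabilityMeasure μ]
    (ξ : Ω → ℝ) (hξm : Measurable ξ) (hξ : ∀ ω, 0 ≤ ξ ω) (r : ℝ) (hr : 0 < r)
    (φ : ℝ → ℝ) (hφ : ∀ l : ℝ, φ l = Real.log (∫ ω, Real.exp (l * ξ ω) ∂μ)) :
    ∀ l : ℝ, 0 < l → Integrable (fun ω => Real.exp (l * ξ ω)) μ → r ≤ φ l →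
      (∫ ω, ξ ω ^ r ∂μ) ^ (1 / r) ≤ φ l / l := by
  intro l hl hint hrl
  set p := φ l with hpdef
  have hp : 0 < p := hr.trans_le hrl
  have hI1 : (1:ℝ) ≤ ∫ ω, Real.exp (l * ξ ω) ∂μ := by
    have := integral_mono (integrable_const (1:ℝ)) hint
      (fun ω => Real.one_le_exp (mul_nonneg hl.le (hξ ω)))
    simpa using this
  have hexp : Real.exp p = ∫ ω, Real.exp (l * ξ ω) ∂μ := by
    rw [hpdef, hφ l]
    exact Real.exp_log (lt_of_lt_of_le one_pos hI1)
  -- pointwise bound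
  have hpt : ∀ ω, (l * ξ ω) ^ r ≤ p ^ r + r * p ^ (r - 1) * (Real.exp (l * ξ ω - p) - 1) :=
    fun ω => key_pointwise hr hrl (mul_nonneg hl.le (hξ ω))
  -- integrability of the bound
  have hintexp : Integrable (fun ω => Real.exp (l * ξ ω - p)) μ := by
    have : (fun ω => Real.exp (l * ξ ω - p)) = fun ω => Real.exp (l * ξ ω) * Real.exp (-p) := by
      funext ω
      rw [← Real.exp_add]
      ring_nf
    rw [this]
    exact hint.mul_const _
  have hintg : Integrable
      (fun ω => p ^ r + r * p ^ (r - 1) * (Real.exp (l * ξ ω - p) - 1)) μ := by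
    exact (integrable_const _).add
      (((hintexp.sub (integrable_const 1)).const_mul _))
  -- integrability of the LHS
  have hmeasL : Measurable (fun ω => (l * ξ ω) ^ r) :=
    (measurable_const.mul hξm).pow_const r
  have hintL : Integrable (fun ω => (l * ξ ω) ^ r) μ := by
    refine hintg.mono' hmeasL.aestronglyMeasurable (Filter.Eventually.of_forall fun ω => ?_)
    rw [Real.norm_eq_abs, abs_of_nonneg (Real.rpow_nonneg (mul_nonneg hl.le (hξ ω)) r)]
    exact hpt ω
  -- integrate the pointwise bound
  have hle := integral_mono hintL hintg (fun ω => hpt ω)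
  -- compute RHS integral
  have hIexp : ∫ ω, Real.exp (l * ξ ω - p) ∂μ = 1 := by
    simp_rw [Real.exp_sub]
    rw [integral_div, ← hexp, div_self (Real.exp_ne_zero p)]
  have ht : Integrable (fun ω => r * p ^ (r - 1) * (Real.exp (l * ξ ω - p) - 1)) μ :=
    (hintexp.sub (integrable_const 1)).const_mul _
  have hts : Integrable (fun ω => Real.exp (l * ξ ω - p) - 1) μ :=
    hintexp.sub (integrable_const 1)
  have hRHS : ∫ ω, (p ^ r + r * p ^ (r - 1) * (Real.exp (l * ξ ω - p) - 1)) ∂μ = p ^ r := by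
    rw [integral_add (integrable_const _) ht, integral_const, integral_const_mul,
      integral_sub hintexp (integrable_const 1), hIexp, integral_const]
    simp
  -- compute LHS integral
  have hLHS : ∫ ω, (l * ξ ω) ^ r ∂μ = l ^ r * ∫ ω, ξ ω ^ r ∂μ := by
    rw [show (fun ω => (l * ξ ω) ^ r) = fun ω => l ^ r * ξ ω ^ r from
      funext fun ω => Real.mul_rpow hl.le (hξ ω), integral_const_mul]
  rw [hLHS, hRHS] at hle
  have hlr : (0:ℝ) < l ^ r := Real.rpow_pos_of_pos hl r
  have hfin : ∫ ω, ξ ω ^ r ∂μ ≤ (p / l) ^ r := by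
    rw [Real.div_rpow hp.le hl.le]
    rw [le_div_iff₀ hlr]
    linarith [hle]
  have h0 : 0 ≤ ∫ ω, ξ ω ^ r ∂μ := integral_nonneg fun ω => Real.rpow_nonneg (hξ ω) r
  have hstep := Real.rpow_le_rpow h0 hfin (by positivity : (0:ℝ) ≤ 1 / r)
  rw [one_div] at hstep ⊢
  rwa [Real.rpow_rpow_inv (by positivity) hr.ne'] at hstep
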